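/- arXiv:1210.3425 — 4 statements merged into one kernel-verified Lean document; each statement's English description precedes it below -/
import Mathlib

section
/- Let n be a natural number. The number of sequences of length n with entries in the four-element set {(1,0), (-1,0), (0,1), (0,-1)} ⊆ ℤ × ℤ whose entries sum to (0,0) equals (n choose n/2)² when n is even, and equals 0 when n is odd. -/
open Finset

lemma pm1_sum (n : ℕ) (w : Fin n → ℤ) (h : ∀ i, w i = 1 ∨ w i = -1) :
    ∑ i, w i = 2 * ((univ.filter fun i => w i = 1).card : ℤ) - n := by
  classical
  rw [← Finset.sum_filter_add_sum_filter_not univ (fun i => w i = 1)]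
  have h1 : ∑ i ∈ univ.filter (fun i => w i = 1), w i
      = ((univ.filter fun i => w i = 1).card : ℤ) := by
    rw [Finset.sum_congr rfl (fun i hi => (Finset.mem_filter.mp hi).2)]
    simp
  have h2 : ∑ i ∈ univ.filter (fun i => ¬ w i = 1), w i
      = -((univ.filter fun i => ¬ w i = 1).card : ℤ) := by
    rw [Finset.sum_congr rfl (fun i hi => ((h i).resolve_left (Finset.mem_filter.mp hi).2))]
    simp
  have h3 : (univ.filter fun i => w i = 1).card + (univ.filter fun i => ¬ w i = 1).card = n := by
    rw [Finset.card_filter_add_card_filter_not]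
    simp
  rw [h1, h2]
  have := congrArg (Nat.cast : ℕ → ℤ) h3
  push_cast at this
  linarith

lemma pm1_card (n : ℕ) :
    Nat.card {w : Fin n → ℤ // (∀ i, w i = 1 ∨ w i = -1) ∧ ∑ i, w i = 0} =
      if Even n then n.choose (n / 2) else 0 := by
  classical
  have e : {w : Fin n → ℤ // (∀ i, w i = 1 ∨ w i = -1) ∧ ∑ i, w i = 0} ≃
      {s : Finset (Fin n) // 2 * s.card = n} :=
    { toFun := fun w => ⟨univ.filter fun i => w.1 i = 1, by
        have := pm1_sum n w.1 w.2.1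
        rw [w.2.2] at this
        omega⟩
      invFun := fun s => ⟨fun i => if i ∈ s.1 then 1 else -1, by
        constructor
        · intro i; dsimp only; split <;> simp
        · have hmem : ∀ i, (if i ∈ s.1 then (1:ℤ) else -1) = 1 ∨ (if i ∈ s.1 then (1:ℤ) else -1) = -1 := by
            intro i; split <;> simp
          have := pm1_sum n _ hmem
          have hf : (univ.filter fun i => (if i ∈ s.1 then (1:ℤ) else -1) = 1) = s.1 := by
            ext i
            simp only [Finset.mem_filter, Finset.mem_univ, true_and]
            split <;> simp_all
          rw [hf] at this
          rw [this]
          have := s.2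
          omega⟩
      left_inv := by
        rintro ⟨w, hw, -⟩
        apply Subtype.ext
        funext i
        simp only [Finset.mem_filter, Finset.mem_univ, true_and]
        rcases hw i with h | h <;> rw [h] <;> simp
      right_inv := by
        rintro ⟨s, hs⟩
        apply Subtype.ext
        ext i
        simp only [Finset.mem_filter, Finset.mem_univ, true_and]
        split <;> simp_all }
  rw [Nat.card_congr e]
  by_cases hn : Even n
  · simp only [hn, if_true]
    have hcond : ∀ s : Finset (Fin n), 2 * s.card = n ↔ s.card = n / 2 := by
      intro s
      obtain ⟨k, hk⟩ := hn
      omega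
    have e2 : {s : Finset (Fin n) // 2 * s.card = n} ≃ {s : Finset (Fin n) // s.card = n / 2} :=
      Equiv.subtypeEquivRight hcond
    rw [Nat.card_congr e2, Nat.card_eq_fintype_card, Fintype.card_finset_len, Fintype.card_fin]
  · simp only [hn, if_false]
    have : IsEmpty {s : Finset (Fin n) // 2 * s.card = n} := by
      constructor; rintro ⟨s, hs⟩
      exact hn ⟨s.card, by omega⟩
    exact Nat.card_of_isEmpty

section aux

variable {n : ℕ}

lemma step_mem {w : Fin n → ℤ × ℤ}
    (hw : ∀ i, w i ∈ ({(1, 0), (-1, 0), (0, 1), (0, -1)} : Set (ℤ × ℤ))) (i : Fin n) :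
    (w i = (1,0) ∨ w i = (-1,0) ∨ w i = (0,1) ∨ w i = (0,-1)) := by
  simpa [Set.mem_insert_iff, Set.mem_singleton_iff] using hw i

lemma toA_mem1 {w : Fin n → ℤ × ℤ}
    (hw : ∀ i, w i ∈ ({(1, 0), (-1, 0), (0, 1), (0, -1)} : Set (ℤ × ℤ))) (i : Fin n) :
    (w i).1 + (w i).2 = 1 ∨ (w i).1 + (w i).2 = -1 := by
  rcases step_mem hw i with h | h | h | h <;> rw [h] <;> norm_num

lemma toA_mem2 {w : Fin n → ℤ × ℤ}
    (hw : ∀ i, w i ∈ ({(1, 0), (-1, 0), (0, 1), (0, -1)} : Set (ℤ × ℤ))) (i : Fin n) :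
    (w i).1 - (w i).2 = 1 ∨ (w i).1 - (w i).2 = -1 := by
  rcases step_mem hw i with h | h | h | h <;> rw [h] <;> norm_num

lemma sum_components {w : Fin n → ℤ × ℤ} (hsum : ∑ i, w i = 0) :
    (∑ i, (w i).1 = 0) ∧ (∑ i, (w i).2 = 0) := by
  constructor
  · rw [← Prod.fst_sum, hsum]; rfl
  · rw [← Prod.snd_sum, hsum]; rfl

lemma toA_sum1 {w : Fin n → ℤ × ℤ} (hsum : ∑ i, w i = 0) :
    ∑ i, ((w i).1 + (w i).2) = 0 := by
  obtain ⟨h1, h2⟩ := sum_components hsum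
  rw [Finset.sum_add_distrib, h1, h2]; norm_num

lemma toA_sum2 {w : Fin n → ℤ × ℤ} (hsum : ∑ i, w i = 0) :
    ∑ i, ((w i).1 - (w i).2) = 0 := by
  obtain ⟨h1, h2⟩ := sum_components hsum
  rw [Finset.sum_sub_distrib, h1, h2]; norm_num

lemma ofA_mem {u v : Fin n → ℤ} (hu : ∀ i, u i = 1 ∨ u i = -1)
    (hv : ∀ i, v i = 1 ∨ v i = -1) (i : Fin n) :
    ((u i + v i) / 2, (u i - v i) / 2) ∈ ({(1, 0), (-1, 0), (0, 1), (0, -1)} : Set (ℤ × ℤ)) := by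
  simp only [Set.mem_insert_iff, Set.mem_singleton_iff, Prod.mk.injEq]
  rcases hu i with h1 | h1 <;> rcases hv i with h2 | h2 <;> rw [h1, h2] <;> norm_num

lemma ofA_sum {u v : Fin n → ℤ} (hu : ∀ i, u i = 1 ∨ u i = -1)
    (hv : ∀ i, v i = 1 ∨ v i = -1) (hus : ∑ i, u i = 0) (hvs : ∑ i, v i = 0) :
    ∑ i, (((u i + v i) / 2, (u i - v i) / 2) : ℤ × ℤ) = 0 := by
  have key1 : ∀ i, (u i + v i) / 2 * 2 = u i + v i := by
    intro i; rcases hu i with h1 | h1 <;> rcases hv i with h2 | h2 <;> rw [h1, h2] <;> norm_num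
  have key2 : ∀ i, (u i - v i) / 2 * 2 = u i - v i := by
    intro i; rcases hu i with h1 | h1 <;> rcases hv i with h2 | h2 <;> rw [h1, h2] <;> norm_num
  have h1 : (∑ i, (u i + v i) / 2) * 2 = 0 := by
    rw [Finset.sum_mul]; simp_rw [key1]
    rw [Finset.sum_add_distrib, hus, hvs]; norm_num
  have h2 : (∑ i, (u i - v i) / 2) * 2 = 0 := by
    rw [Finset.sum_mul]; simp_rw [key2]
    rw [Finset.sum_sub_distrib, hus, hvs]; norm_num
  have hp : (∑ i, (((u i + v i) / 2, (u i - v i) / 2) : ℤ × ℤ))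
      = (∑ i, (u i + v i) / 2, ∑ i, (u i - v i) / 2) := by
    rw [Prod.ext_iff]; exact ⟨Prod.fst_sum, Prod.snd_sum⟩
  rw [hp, Prod.mk_eq_zero]
  omega

end aux

/-- The number of sequences of length `n` with entries in
`{(1,0), (-1,0), (0,1), (0,-1)} ⊆ ℤ × ℤ` summing to `(0,0)` is `(n choose n/2)²`
for even `n`, and `0` for odd `n`. -/
theorem count_trivial_words_Z2 (n : ℕ) :
    Nat.card {w : Fin n → ℤ × ℤ //
        (∀ i, w i ∈ ({(1, 0), (-1, 0), (0, 1), (0, -1)} : Set (ℤ × ℤ))) ∧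
        ∑ i, w i = 0} =
      if Even n then n.choose (n / 2) ^ 2 else 0 := by
  classical
  have e : {w : Fin n → ℤ × ℤ //
        (∀ i, w i ∈ ({(1, 0), (-1, 0), (0, 1), (0, -1)} : Set (ℤ × ℤ))) ∧
        ∑ i, w i = 0} ≃
      {w : Fin n → ℤ // (∀ i, w i = 1 ∨ w i = -1) ∧ ∑ i, w i = 0} ×
      {w : Fin n → ℤ // (∀ i, w i = 1 ∨ w i = -1) ∧ ∑ i, w i = 0} :=
    { toFun := fun w =>
        (⟨fun i => (w.1 i).1 + (w.1 i).2, fun i => toA_mem1 w.2.1 i, toA_sum1 w.2.2⟩,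
         ⟨fun i => (w.1 i).1 - (w.1 i).2, fun i => toA_mem2 w.2.1 i, toA_sum2 w.2.2⟩)
      invFun := fun p =>
        ⟨fun i => ((p.1.1 i + p.2.1 i) / 2, (p.1.1 i - p.2.1 i) / 2),
         fun i => ofA_mem p.1.2.1 p.2.2.1 i,
         ofA_sum p.1.2.1 p.2.2.1 p.1.2.2 p.2.2.2⟩
      left_inv := by
        rintro ⟨w, hw, hsum⟩
        apply Subtype.ext
        funext i
        show (((w i).1 + (w i).2 + ((w i).1 - (w i).2)) / 2,
              ((w i).1 + (w i).2 - ((w i).1 - (w i).2)) / 2) = w i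
        rcases step_mem hw i with h | h | h | h <;> rw [h] <;> norm_num
      right_inv := by
        rintro ⟨⟨u, hu, hus⟩, ⟨v, hv, hvs⟩⟩
        have e1 : ∀ i, (u i + v i) / 2 + (u i - v i) / 2 = u i := by
          intro i; rcases hu i with h1 | h1 <;> rcases hv i with h2 | h2 <;>
            rw [h1, h2] <;> norm_num
        have e2 : ∀ i, (u i + v i) / 2 - (u i - v i) / 2 = v i := by
          intro i; rcases hu i with h1 | h1 <;> rcases hv i with h2 | h2 <;>
            rw [h1, h2] <;> norm_num
        refine Prod.ext ?_ ?_ <;> apply Subtype.ext <;> funext i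
        · exact e1 i
        · exact e2 i }
  rw [Nat.card_congr e, Nat.card_prod, pm1_card]
  by_cases hn : Even n <;> simp [hn, sq]
end

section
/- For every integer N ≥ 1, in the Baumslag–Solitar group BS(N,N), limsup_{n→∞} (g_n)^{1/n} = limsup_{n→∞} (g_{n,0})^{1/n}, where the n-th roots are real n-th roots. Equivalently, the power series G(z;1) = Σ_{n≥0} g_n z^n and [q⁰]G(z;q) = Σ_{n≥0} g_{n,0} z^n have the same radius of convergence. -/
noncomputable section

open LaurentPolynomial PowerSeries

/-- The single relator `a^N b a^{-M} b^{-1}` of the Baumslag–Solitar group. -/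
def bsRels (N M : ℕ) : Set (FreeGroup (Fin 2)) :=
  {FreeGroup.of 0 ^ N * FreeGroup.of 1 * (FreeGroup.of 0 ^ M)⁻¹ * (FreeGroup.of 1)⁻¹}

/-- The Baumslag–Solitar group `BS(N,M)`. -/
abbrev BSGroup (N M : ℕ) := PresentedGroup (bsRels N M)

/-- The image of the generator `a` in `BS(N,M)`. -/
def bsA (N M : ℕ) : BSGroup N M := PresentedGroup.of 0

/-- The image of the generator `b` in `BS(N,M)`. -/
def bsB (N M : ℕ) : BSGroup N M := PresentedGroup.of 1

/-- The alphabet `{a, a⁻¹, b, b⁻¹}`: a generator index together with a sign. -/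
abbrev BSLetter : Type := Fin 2 × Bool

/-- The evaluation of a letter in `BS(N,M)`. -/
def letterVal (N M : ℕ) (p : BSLetter) : BSGroup N M :=
  if p.2 then PresentedGroup.of p.1 else (PresentedGroup.of p.1)⁻¹

/-- The evaluation in `BS(N,M)` of the prefix of length `m` of a word. -/
def prefixVal (N M : ℕ) {n : ℕ} (w : Fin n → BSLetter) (m : ℕ) : BSGroup N M :=
  (((List.ofFn w).take m).map (letterVal N M)).prod

/-- The evaluation of a word of length `n` in `BS(N,M)`. -/
def wordVal (N M : ℕ) {n : ℕ} (w : Fin n → BSLetter) : BSGroup N M :=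
  ((List.ofFn w).map (letterVal N M)).prod

/-- `g_{n,k}`: the number of words of length `n` evaluating to `a^k` in `BS(N,M)`. -/
def gCount (N M n : ℕ) (k : ℤ) : ℕ :=
  Nat.card {w : Fin n → BSLetter // wordVal N M w = bsA N M ^ k}

/-- `g_n`: the number of words of length `n` whose evaluation lies in `⟨a⟩`. -/
def gTot (N M n : ℕ) : ℕ :=
  Nat.card {w : Fin n → BSLetter // ∃ k : ℤ, wordVal N M w = bsA N M ^ k}

/-- Membership in `𝓛`: the evaluation lies in `⟨a⟩` and no proper prefix evaluates
into the coset `b⁻¹⟨a⟩`. -/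
def memL (N M : ℕ) {n : ℕ} (w : Fin n → BSLetter) : Prop :=
  (∃ k : ℤ, wordVal N M w = bsA N M ^ k) ∧
    ∀ m < n, ¬ ∃ j : ℤ, prefixVal N M w m = (bsB N M)⁻¹ * bsA N M ^ j

/-- Membership in `𝓚`: the evaluation lies in `⟨a⟩` and no proper prefix evaluates
into the coset `b⟨a⟩`. -/
def memK (N M : ℕ) {n : ℕ} (w : Fin n → BSLetter) : Prop :=
  (∃ k : ℤ, wordVal N M w = bsA N M ^ k) ∧
    ∀ m < n, ¬ ∃ j : ℤ, prefixVal N M w m = bsB N M * bsA N M ^ j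

/-- `ℓ_{n,k}`: the number of words in `𝓛` of length `n` evaluating to `a^k`. -/
def lCount (N M n : ℕ) (k : ℤ) : ℕ :=
  Nat.card {w : Fin n → BSLetter // memL N M w ∧ wordVal N M w = bsA N M ^ k}

/-- `κ_{n,k}`: the number of words in `𝓚` of length `n` evaluating to `a^k`. -/
def kCount (N M n : ℕ) (k : ℤ) : ℕ :=
  Nat.card {w : Fin n → BSLetter // memK N M w ∧ wordVal N M w = bsA N M ^ k}

/-- The number of words of length `n` in `𝓛`. -/
def lTot (N M n : ℕ) : ℕ := Nat.card {w : Fin n → BSLetter // memL N M w}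

/-- The number of words of length `n` in `𝓚`. -/
def kTot (N M n : ℕ) : ℕ := Nat.card {w : Fin n → BSLetter // memK N M w}

/-- Package counting data `f n k` into the Laurent polynomial `Σ_k f n k · q^k`
(the counts vanish for `|k| > n`). -/
def coeffPoly (f : ℕ → ℤ → ℕ) (n : ℕ) : LaurentPolynomial ℚ :=
  ∑ k ∈ Finset.Icc (-(n : ℤ)) (n : ℤ), LaurentPolynomial.C (f n k : ℚ) * T k

/-- The generating function `G(z;q)`. -/
def Gser (N M : ℕ) : PowerSeries (LaurentPolynomial ℚ) := PowerSeries.mk (coeffPoly (gCount N M))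

/-- The generating function `L(z;q)`. -/
def Lser (N M : ℕ) : PowerSeries (LaurentPolynomial ℚ) := PowerSeries.mk (coeffPoly (lCount N M))

/-- The generating function `K(z;q)`. -/
def Kser (N M : ℕ) : PowerSeries (LaurentPolynomial ℚ) := PowerSeries.mk (coeffPoly (kCount N M))

/-- The `ℚ`-linear operator `Φ_{d,e}` on `ℚ[q,q⁻¹]`: maps `q^{dj} ↦ q^{ej}` and kills
`q^k` when `d ∤ k`. -/
def Phi (d e : ℕ) (p : LaurentPolynomial ℚ) : LaurentPolynomial ℚ :=
  Finsupp.sum p.coeff fun k c => if (d : ℤ) ∣ k then LaurentPolynomial.C c * T ((e : ℤ) * (k / d)) else 0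

/-- `Φ_{d,e}` applied coefficientwise to power series. -/
def PhiSer (d e : ℕ) (f : PowerSeries (LaurentPolynomial ℚ)) : PowerSeries (LaurentPolynomial ℚ) :=
  PowerSeries.mk fun n => Phi d e (PowerSeries.coeff n f)

/-- The Laurent polynomial `Q = q + q⁻¹`. -/
def Qpoly : LaurentPolynomial ℚ := T 1 + T (-1)

end

noncomputable section
-- auxiliary
def phiFun : Fin 2 → Multiplicative ℤ := fun i => if i = 0 then Multiplicative.ofAdd 1 else 1

lemma phi_rel (N : ℕ) : ∀ r ∈ bsRels N N, FreeGroup.lift phiFun r = 1 := by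
  intro r hr
  simp only [bsRels, Set.mem_singleton_iff] at hr
  subst hr
  simp [phiFun]

def phi (N : ℕ) : BSGroup N N →* Multiplicative ℤ := PresentedGroup.toGroup (phi_rel N)

lemma phi_bsA (N : ℕ) : phi N (bsA N N) = Multiplicative.ofAdd 1 := by
  simp [phi, bsA, PresentedGroup.toGroup.of, phiFun]

lemma phi_pow (N : ℕ) (k : ℤ) : Multiplicative.toAdd (phi N (bsA N N ^ k)) = k := by
  rw [map_zpow, phi_bsA]
  simp

lemma pow_inj (N : ℕ) {k j : ℤ} (h : bsA N N ^ k = bsA N N ^ j) : k = j := by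
  have h1 := phi_pow N k
  rw [h] at h1
  rw [← h1, phi_pow]

lemma abs_letter (N : ℕ) (p : BSLetter) :
    |Multiplicative.toAdd (phi N (letterVal N N p))| ≤ 1 := by
  obtain ⟨i, b⟩ := p
  have hof : ∀ j : Fin 2, phi N (PresentedGroup.of j) = phiFun j := fun j =>
    PresentedGroup.toGroup.of (phi_rel N)
  fin_cases i <;> cases b <;>
    simp [letterVal, hof, phiFun]

lemma abs_list (N : ℕ) : ∀ l : List BSLetter,
    |Multiplicative.toAdd (phi N ((l.map (letterVal N N)).prod))| ≤ (l.length : ℤ) := by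
  intro l
  induction l with
  | nil => simp
  | cons p l ih =>
    simp only [List.map_cons, List.prod_cons, map_mul, List.length_cons]
    calc |Multiplicative.toAdd (phi N (letterVal N N p) * phi N ((l.map (letterVal N N)).prod))|
        = |Multiplicative.toAdd (phi N (letterVal N N p)) +
            Multiplicative.toAdd (phi N ((l.map (letterVal N N)).prod))| := by simp
      _ ≤ _ + _ := abs_add_le _ _
      _ ≤ 1 + l.length := add_le_add (abs_letter N p) ih
      _ ≤ _ := by push_cast; omega

lemma exp_eq (N n : ℕ) (w : Fin n → BSLetter) {k : ℤ} (h : wordVal N N w = bsA N N ^ k) :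
    Multiplicative.toAdd (phi N (wordVal N N w)) = k ∧ |k| ≤ (n : ℤ) := by
  have h1 : Multiplicative.toAdd (phi N (wordVal N N w)) = k := by rw [h, phi_pow]
  refine ⟨h1, ?_⟩
  have := abs_list N (List.ofFn w)
  rw [wordVal] at h1
  rw [h1, List.length_ofFn] at this
  exact this

lemma natCard_sigma {ι : Type} [Fintype ι] (f : ι → Type) [∀ i, Finite (f i)] :
    Nat.card (Σ i, f i) = ∑ i, Nat.card (f i) := by
  classical
  have := fun i => Fintype.ofFinite (f i)
  simp [Nat.card_eq_fintype_card, Fintype.card_sigma]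

lemma gTot_le_sum (N n : ℕ) :
    gTot N N n ≤ ∑ k ∈ Finset.Icc (-(n : ℤ)) (n : ℤ), gCount N N n k := by
  classical
  set s := Finset.Icc (-(n : ℤ)) (n : ℤ)
  have key : gTot N N n ≤
      Nat.card (Σ k : s, {w : Fin n → BSLetter // wordVal N N w = bsA N N ^ (k : ℤ)}) := by
    apply Nat.card_le_card_of_injective
      (f := fun w => ⟨⟨Multiplicative.toAdd (phi N (wordVal N N w.1)), by
        obtain ⟨k, hk⟩ := w.2
        obtain ⟨h1, h2⟩ := exp_eq N n w.1 hk
        rw [h1]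
        simp only [s, Finset.mem_Icc]
        rw [abs_le] at h2
        omega⟩, ⟨w.1, by
        obtain ⟨k, hk⟩ := w.2
        obtain ⟨h1, h2⟩ := exp_eq N n w.1 hk
        show wordVal N N w.1 = bsA N N ^ (Multiplicative.toAdd (phi N (wordVal N N w.1)))
        rw [h1]; exact hk⟩⟩)
    intro w v h
    apply Subtype.ext
    exact congrArg (fun x => (x.2 : Fin n → BSLetter)) h
  calc gTot N N n ≤ _ := key
    _ = ∑ k : s, gCount N N n (k : ℤ) := natCard_sigma _
    _ = ∑ k ∈ s, gCount N N n k := Finset.sum_coe_sort s _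

lemma ofFn_rev {α : Type} {n : ℕ} (f : Fin n → α) :
    List.ofFn (fun i => f (Fin.rev i)) = (List.ofFn f).reverse := by
  apply List.ext_getElem
  · simp
  · intro i h1 h2
    simp only [List.getElem_ofFn, List.getElem_reverse, List.length_ofFn]
    congr 1
    ext
    simp only [Fin.val_rev]
    simp only [List.length_ofFn, List.length_reverse] at h1 h2
    omega

def invL (p : BSLetter) : BSLetter := (p.1, !p.2)

lemma invL_invol : Function.Involutive invL := by
  intro p; cases p; simp [invL]

lemma letterVal_invL (N M : ℕ) (p : BSLetter) :
    letterVal N M (invL p) = (letterVal N M p)⁻¹ := by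
  obtain ⟨i, b⟩ := p; cases b <;> simp [letterVal, invL]

lemma wordVal_inv (N M n : ℕ) (w : Fin n → BSLetter) :
    wordVal N M (fun i => invL (w (Fin.rev i))) = (wordVal N M w)⁻¹ := by
  unfold wordVal
  rw [List.prod_inv_reverse, ofFn_rev (fun i => invL (w i))]
  simp [List.map_reverse, List.map_ofFn, Function.comp_def, letterVal_invL]

def revInvPerm (n : ℕ) : Equiv.Perm (Fin n → BSLetter) :=
  Function.Involutive.toPerm (fun w => fun i => invL (w (Fin.rev i))) (by
    intro w; funext i; simp [invL_invol (w _ )])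

lemma gCount_neg (N n : ℕ) (k : ℤ) : gCount N N n (-k) = gCount N N n k := by
  unfold gCount
  apply Nat.card_congr
  refine Equiv.subtypeEquiv (revInvPerm n) fun w => ?_
  have h := wordVal_inv N N n w
  constructor
  · intro hw
    show wordVal N N (fun i => invL (w (Fin.rev i))) = _
    rw [h, hw]
    simp [← zpow_neg]
  · intro hw
    have : (wordVal N N w)⁻¹ = bsA N N ^ k := by rw [← h]; exact hw
    rw [← inv_inv (wordVal N N w), this]
    simp [← zpow_neg]

lemma wordVal_append (N M n : ℕ) (w v : Fin n → BSLetter) :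
    wordVal N M (Fin.append w v) = wordVal N M w * wordVal N M v := by
  unfold wordVal
  rw [List.ofFn_fin_append, List.map_append, List.prod_append]

lemma gCount_sq_le (N n : ℕ) (k : ℤ) :
    gCount N N n k * gCount N N n k ≤ gCount N N (n + n) 0 := by
  have h := gCount_neg N n k
  nth_rewrite 2 [← h]
  show gCount N N n k * gCount N N n (-k) ≤ _
  unfold gCount
  rw [← Nat.card_prod]
  apply Nat.card_le_card_of_injective
    (f := fun p => ⟨Fin.append p.1.1 p.2.1, by
      rw [wordVal_append, p.1.2, p.2.2, ← zpow_add, add_neg_cancel, zpow_zero]⟩)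
  rintro ⟨⟨w, hw⟩, ⟨v, hv⟩⟩ ⟨⟨w', hw'⟩, ⟨v', hv'⟩⟩ hwv
  have h1 : Fin.append w v = Fin.append w' v' := congrArg Subtype.val hwv
  have hw2 : w = w' := by
    funext i
    have := congrFun h1 (Fin.castAdd n i)
    simpa [Fin.append_left] using this
  have hv2 : v = v' := by
    funext i
    have := congrFun h1 (Fin.natAdd n i)
    rw [Fin.append_right, Fin.append_right] at this
    exact this
  subst hw2; subst hv2; rfl

lemma one_le_gCount (N n : ℕ) : 1 ≤ gCount N N (n + n) 0 := by
  unfold gCount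
  rw [Nat.one_le_iff_ne_zero, Nat.card_ne_zero]
  constructor
  · refine ⟨⟨Fin.append (fun _ => ((0 : Fin 2), true)) (fun _ => ((0 : Fin 2), false)), ?_⟩⟩
    rw [wordVal_append]
    unfold wordVal
    simp only [List.ofFn_const, List.map_replicate, List.prod_replicate, zpow_zero]
    have : letterVal N N ((0 : Fin 2), false) = (letterVal N N ((0 : Fin 2), true))⁻¹ := by
      simp [letterVal]
    rw [this, inv_pow, mul_inv_cancel]
  · infer_instance

lemma gCount0_le_gTot (N n : ℕ) : gCount N N n 0 ≤ gTot N N n := by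
  unfold gCount gTot
  apply Nat.card_le_card_of_injective (f := fun w => ⟨w.1, ⟨0, w.2⟩⟩)
  intro w v h
  rw [Subtype.mk.injEq] at h
  exact Subtype.ext h

lemma gTot_le_4pow (N n : ℕ) : gTot N N n ≤ 4 ^ n := by
  unfold gTot
  have : (4 : ℕ) ^ n = Nat.card (Fin n → BSLetter) := by
    simp [Nat.card_eq_fintype_card, Fintype.card_fun]
  rw [this]
  exact Nat.card_le_card_of_injective Subtype.val Subtype.val_injective

end

open Filter in
/-- For `BS(N,N)`, the growth rate of the number `g_n` of words of length `n`
evaluating into `⟨a⟩` equals the growth rate of the number `g_{n,0}` of words of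
length `n` evaluating to the identity. -/
theorem bsNN_limsup_g_eq_limsup_g0 (N : ℕ) (hN : 1 ≤ N) :
    (Filter.atTop.limsup fun n : ℕ => (gTot N N n : ℝ) ^ (1 / (n : ℝ))) =
      Filter.atTop.limsup fun n : ℕ => (gCount N N n 0 : ℝ) ^ (1 / (n : ℝ)) := by
  set a : ℕ → ℝ := fun n => (gTot N N n : ℝ) ^ (1 / (n : ℝ)) with ha
  set b : ℕ → ℝ := fun n => (gCount N N n 0 : ℝ) ^ (1 / (n : ℝ)) with hb
  -- basic positivity / bounds
  have hb_nonneg : ∀ n, 0 ≤ b n := fun n => Real.rpow_nonneg (Nat.cast_nonneg _) _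
  have ha_nonneg : ∀ n, 0 ≤ a n := fun n => Real.rpow_nonneg (Nat.cast_nonneg _) _
  have ha_le4 : ∀ n, a n ≤ 4 := by
    intro n
    rcases Nat.eq_zero_or_pos n with h0 | hpos
    · subst h0; simp [ha]
    · have h1 : (gTot N N n : ℝ) ≤ (4 : ℝ) ^ (n : ℕ) := by
        exact_mod_cast Nat.cast_le.mpr (gTot_le_4pow N n)
      have h2 : a n ≤ ((4 : ℝ) ^ (n : ℕ)) ^ (1 / (n : ℝ)) :=
        Real.rpow_le_rpow (Nat.cast_nonneg _) h1 (by positivity)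
      calc a n ≤ _ := h2
        _ = 4 := by
          rw [← Real.rpow_natCast 4 n, ← Real.rpow_mul (by norm_num)]
          rw [mul_one_div_cancel (by exact_mod_cast hpos.ne' : (n:ℝ) ≠ 0)]
          norm_num
  have hb_le4 : ∀ n, b n ≤ 4 := by
    intro n
    calc b n ≤ a n := by
          apply Real.rpow_le_rpow (Nat.cast_nonneg _) (Nat.cast_le.mpr (gCount0_le_gTot N n))
          positivity
      _ ≤ 4 := ha_le4 n
  have hbb : IsBoundedUnder (· ≤ ·) atTop b := isBoundedUnder_of ⟨4, hb_le4⟩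
  have hba : IsBoundedUnder (· ≤ ·) atTop a := isBoundedUnder_of ⟨4, ha_le4⟩
  have hcb : IsCoboundedUnder (· ≤ ·) atTop b :=
    isCoboundedUnder_le_of_le atTop hb_nonneg
  have hca : IsCoboundedUnder (· ≤ ·) atTop a :=
    isCoboundedUnder_le_of_le atTop ha_nonneg
  -- 1 ≤ limsup b
  have hB1 : (1 : ℝ) ≤ atTop.limsup b := by
    apply le_limsup_of_frequently_le _ hbb
    rw [Filter.frequently_atTop]
    intro m
    refine ⟨m + m, by omega, ?_⟩
    apply Real.one_le_rpow _ (by positivity)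
    exact_mod_cast one_le_gCount N m
  -- key inequality : a n ≤ (2n+1)^(1/n) * b (2n)
  have key : ∀ n : ℕ, 1 ≤ n →
      a n ≤ ((2 * n + 1 : ℕ) : ℝ) ^ (1 / (n : ℝ)) * b (2 * n) := by
    intro n hn
    have hn0 : (n : ℝ) ≠ 0 := by exact_mod_cast (by omega : n ≠ 0)
    have hstep : (gTot N N n : ℝ) ≤ ((2 * n + 1 : ℕ) : ℝ) * Real.sqrt (gCount N N (n + n) 0) := by
      calc (gTot N N n : ℝ) ≤ ((∑ k ∈ Finset.Icc (-(n : ℤ)) (n : ℤ), gCount N N n k : ℕ) : ℝ) :=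
            Nat.cast_le.mpr (gTot_le_sum N n)
        _ = ∑ k ∈ Finset.Icc (-(n : ℤ)) (n : ℤ), ((gCount N N n k : ℕ) : ℝ) := by push_cast; ring
        _ ≤ ∑ _k ∈ Finset.Icc (-(n : ℤ)) (n : ℤ), Real.sqrt (gCount N N (n + n) 0) := by
            apply Finset.sum_le_sum
            intro k _
            apply Real.le_sqrt_of_sq_le
            rw [sq]
            exact_mod_cast Nat.cast_le.mpr (gCount_sq_le N n k)
        _ = ((2 * n + 1 : ℕ) : ℝ) * Real.sqrt (gCount N N (n + n) 0) := by
            rw [Finset.sum_const, Int.card_Icc]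
            simp only [nsmul_eq_mul]
            congr 1
            have : ((n : ℤ) + 1 - -(n : ℤ)).toNat = 2 * n + 1 := by omega
            rw [this]
    have h2 : a n ≤ (((2 * n + 1 : ℕ) : ℝ) * Real.sqrt (gCount N N (n + n) 0)) ^ (1 / (n : ℝ)) :=
      Real.rpow_le_rpow (Nat.cast_nonneg _) hstep (by positivity)
    calc a n ≤ _ := h2
      _ = ((2 * n + 1 : ℕ) : ℝ) ^ (1 / (n : ℝ)) *
          (Real.sqrt (gCount N N (n + n) 0)) ^ (1 / (n : ℝ)) :=
          Real.mul_rpow (Nat.cast_nonneg _) (Real.sqrt_nonneg _)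
      _ = ((2 * n + 1 : ℕ) : ℝ) ^ (1 / (n : ℝ)) * b (2 * n) := by
          congr 1
          rw [Real.sqrt_eq_rpow, ← Real.rpow_mul (Nat.cast_nonneg _), hb]
          have h1 : gCount N N (n + n) 0 = gCount N N (2 * n) 0 := by rw [two_mul]
          rw [h1]
          congr 1
          push_cast
          field_simp
  have hpt : ∀ n, b n ≤ a n := by
    intro n
    apply Real.rpow_le_rpow (Nat.cast_nonneg _) (Nat.cast_le.mpr (gCount0_le_gTot N n))
    positivity
  apply le_antisymm
  · -- limsup a ≤ limsup b
    apply le_of_forall_gt_imp_ge_of_dense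
    intro y hy
    set B := atTop.limsup b with hBdef
    set y' := (B + y) / 2 with hy'
    have hBy' : B < y' := by rw [hy']; change B < y at hy; linarith
    have hy'y : y' < y := by rw [hy']; change B < y at hy; linarith
    have hy'1 : (1 : ℝ) ≤ y' := by rw [hy']; change B < y at hy; linarith [hB1]
    have hy'pos : (0 : ℝ) < y' := by linarith
    have hypos : (0 : ℝ) < y := by linarith
    have hev1 : ∀ᶠ m in atTop, b m < y' := eventually_lt_of_limsup_lt hBy' hbb
    have htwo : Tendsto (fun n : ℕ => 2 * n) atTop atTop :=
      tendsto_atTop_atTop_of_monotone (fun i j h => by omega) (fun m => ⟨m, by omega⟩)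
    have hev2 : ∀ᶠ n in atTop, b (2 * n) < y' := htwo.eventually hev1
    have hc : ∀ᶠ n : ℕ in atTop, ((2 * n + 1 : ℕ) : ℝ) ^ (1 / (n : ℝ)) ≤ y / y' := by
      have hr0 : (0 : ℝ) ≤ y' / y := by positivity
      have hr1 : y' / y < 1 := (div_lt_one hypos).mpr hy'y
      have h0 := tendsto_self_mul_const_pow_of_lt_one hr0 hr1
      have h2 := tendsto_pow_atTop_nhds_zero_of_lt_one hr0 hr1
      have h1 : Tendsto (fun n : ℕ => ((2 * n + 1 : ℕ) : ℝ) * (y' / y) ^ n) atTop (nhds 0) := by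
        have h3 := (h0.const_mul 2).add h2
        simp only [mul_zero, add_zero, zero_add] at h3
        convert h3 using 2 with n
        push_cast; ring
      have h4 : ∀ᶠ n : ℕ in atTop, ((2 * n + 1 : ℕ) : ℝ) * (y' / y) ^ n < 1 :=
        h1.eventually_lt_const one_pos
      filter_upwards [h4, eventually_ge_atTop 1] with n h5 h6
      have hn0 : (n : ℝ) ≠ 0 := by exact_mod_cast (by omega : n ≠ 0)
      have hpow : ((2 * n + 1 : ℕ) : ℝ) ≤ (y / y') ^ n := by
        have hy'y0 : (y' / y) ^ n * (y / y') ^ n = 1 := by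
          rw [← mul_pow]
          have hone : y' / y * (y / y') = 1 := by field_simp
          rw [hone, one_pow]
        nlinarith [pow_pos (div_pos hy'pos hypos) n, pow_pos (div_pos hypos hy'pos) n,
          Nat.cast_nonneg (α := ℝ) (2 * n + 1)]
      calc ((2 * n + 1 : ℕ) : ℝ) ^ (1 / (n : ℝ)) ≤ ((y / y') ^ n) ^ (1 / (n : ℝ)) :=
            Real.rpow_le_rpow (Nat.cast_nonneg _) hpow (by positivity)
        _ = y / y' := by
            rw [← Real.rpow_natCast (y / y') n, ← Real.rpow_mul (by positivity),
              mul_one_div_cancel hn0, Real.rpow_one]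
    have hfinal : ∀ᶠ n : ℕ in atTop, a n ≤ y := by
      filter_upwards [hev2, hc, eventually_ge_atTop 1] with n h2 h3 h1n
      calc a n ≤ ((2 * n + 1 : ℕ) : ℝ) ^ (1 / (n : ℝ)) * b (2 * n) := key n h1n
        _ ≤ (y / y') * y' :=
            mul_le_mul h3 h2.le (hb_nonneg _) (by positivity)
        _ = y := div_mul_cancel₀ y hy'pos.ne'
    exact limsup_le_of_le hca hfinal
  · exact limsup_le_limsup (Eventually.of_forall hpt) hcb hba
end

section
/- Let t_n denote the number of words of length n over the alphabet {a, a⁻¹, b, b⁻¹} whose product in the free group F(a,b) on two generators is the identity. Then the formal power series T(z) = Σ_{n≥0} t_n z^n ∈ ℚ[[z]] satisfies the quadratic equation (1 − 16z²)·T² + 2T − 3 = 0; equivalently, T(z) = 3/(1 + 2√(1 − 12z²)). -/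
noncomputable section

/-- The evaluation of a letter from the alphabet `{a, a⁻¹, b, b⁻¹}` in the free
group `F(a,b)` on two generators. -/
def freeLetterVal (p : Fin 2 × Bool) : FreeGroup (Fin 2) :=
  if p.2 then FreeGroup.of p.1 else (FreeGroup.of p.1)⁻¹

/-- `t_n`: the number of words of length `n` over `{a, a⁻¹, b, b⁻¹}` whose product
in the free group `F(a,b)` is the identity. -/
def tCount (n : ℕ) : ℕ :=
  Nat.card {w : Fin n → Fin 2 × Bool // ((List.ofFn w).map freeLetterVal).prod = 1}


namespace FGaux

abbrev Letter := Fin 2 × Bool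
abbrev FG := FreeGroup (Fin 2)

def invL (x : Letter) : Letter := (x.1, !x.2)

lemma mk_cons (x : Letter) (w : List Letter) :
    FreeGroup.mk (x :: w) = FreeGroup.mk [x] * FreeGroup.mk w := by
  rw [FreeGroup.mul_mk]; rfl

lemma toWord_single (x : Letter) : (FreeGroup.mk [x]).toWord = [x] := by
  rw [FreeGroup.toWord_mk, FreeGroup.reduce_singleton]

lemma single_ne_one (x : Letter) : FreeGroup.mk [x] ≠ 1 := by
  intro h
  have := congrArg FreeGroup.toWord h
  rw [toWord_single, FreeGroup.toWord_one] at this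
  exact List.cons_ne_nil _ _ this

lemma single_inj {x y : Letter} (h : FreeGroup.mk [x] = FreeGroup.mk [y]) : x = y := by
  have := congrArg FreeGroup.toWord h
  rw [toWord_single, toWord_single] at this
  exact (List.cons_eq_cons.mp this).1

lemma inv_single (x : Letter) : (FreeGroup.mk [x])⁻¹ = FreeGroup.mk [invL x] := by
  rw [FreeGroup.inv_mk]; simp [FreeGroup.invRev, invL]

lemma pair_eq_one_iff (x y : Letter) : FreeGroup.mk [x, y] = 1 ↔ y = invL x := by
  have : FreeGroup.mk [x, y] = FreeGroup.mk [x] * FreeGroup.mk [y] := by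
    rw [FreeGroup.mul_mk]; norm_num
  rw [this]
  constructor
  · intro h
    have : FreeGroup.mk [y] = (FreeGroup.mk [x])⁻¹ := eq_inv_of_mul_eq_one_right h
    rw [inv_single] at this
    exact single_inj this
  · intro h
    subst h
    rw [← inv_single, mul_inv_cancel]

/-- Key lemma: left multiplication by a letter that doesn't kill the element
preserves the last letter of the reduced word. -/
lemma getLast_mul (x : Letter) (h : FG) (h1 : h ≠ 1) (h2 : FreeGroup.mk [x] * h ≠ 1) :
    (FreeGroup.mk [x] * h).toWord.getLast? = h.toWord.getLast? := by
  have hw : (FreeGroup.mk [x] * h).toWord = FreeGroup.reduce (x :: h.toWord) := by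
    conv_lhs => rw [← FreeGroup.mk_toWord (x := h), FreeGroup.mul_mk]
    rw [FreeGroup.toWord_mk]; rfl
  have hred : FreeGroup.reduce h.toWord = h.toWord := FreeGroup.reduce_toWord h
  rw [hw, FreeGroup.reduce.cons, hred]
  rcases hht : h.toWord with _ | ⟨y, ys⟩
  · exact absurd (FreeGroup.toWord_eq_nil_iff.mp hht) h1
  · rw [show (List.casesOn (y :: ys) [x] fun hd tl =>
        if x.1 = hd.1 ∧ x.2 = !hd.2 then tl else x :: hd :: tl)
        = if x.1 = y.1 ∧ x.2 = !y.2 then ys else x :: y :: ys from rfl]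
    by_cases hc : x.1 = y.1 ∧ x.2 = !y.2
    · rw [if_pos hc]
      have hys : ys ≠ [] := by
        intro hnil
        apply h2
        rw [← FreeGroup.toWord_eq_nil_iff, hw, FreeGroup.reduce.cons, hred, hht]
        simp [hc, hnil]
      cases ys with
      | nil => exact absurd rfl hys
      | cons a l => rw [List.getLast?_cons_cons]
    · rw [if_neg hc, List.getLast?_cons_cons]


lemma val_eq_mk (x : Letter) : freeLetterVal x = FreeGroup.mk [x] := by
  rcases x with ⟨i, b⟩
  cases b
  · show (FreeGroup.of i)⁻¹ = _
    have : FreeGroup.of i = FreeGroup.mk [(i, true)] := rfl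
    rw [this, inv_single]; rfl
  · rfl

lemma prod_map_val (w : List Letter) : (w.map freeLetterVal).prod = FreeGroup.mk w := by
  induction w with
  | nil => rw [List.map_nil, List.prod_nil, FreeGroup.one_eq_mk]
  | cons x w ih => rw [List.map_cons, List.prod_cons, ih, val_eq_mk, ← mk_cons]

lemma mk_append (u v : List Letter) :
    FreeGroup.mk (u ++ v) = FreeGroup.mk u * FreeGroup.mk v := (FreeGroup.mul_mk).symm

lemma finite_subtype (n : ℕ) (P : List Letter → Prop) :
    Finite {w : List Letter // w.length = n ∧ P w} := by
  have h := List.finite_length_eq Letter n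
  have : Finite {w : List Letter // w.length = n} := h.to_subtype
  apply Finite.of_injective
    (fun x => (⟨x.1, x.2.1⟩ : {w : List Letter // w.length = n}))
  intro a b hab
  simpa [Subtype.ext_iff] using hab

lemma card_sigma {ι : Type*} [Fintype ι] (f : ι → Type*) [∀ i, Finite (f i)] :
    Nat.card (Σ i, f i) = ∑ i, Nat.card (f i) := by
  have : ∀ i, Fintype (f i) := fun i => Fintype.ofFinite (f i)
  classical
  haveI := this
  simp [Nat.card_eq_fintype_card, Fintype.card_sigma]

lemma walk_getLast (t : List Letter) : ∀ (m : List Letter),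
    (∀ j, j ≤ m.length → FreeGroup.mk (m.drop j ++ t) ≠ 1) →
    ∀ j, (FreeGroup.mk (m.drop j ++ t)).toWord.getLast? = (FreeGroup.mk t).toWord.getLast? := by
  intro m
  induction m with
  | nil => intro _ j; rw [List.drop_nil, List.nil_append]
  | cons x m ih =>
    intro hyp j
    have hyp' : ∀ j, j ≤ m.length → FreeGroup.mk (m.drop j ++ t) ≠ 1 := by
      intro j hj
      have := hyp (j+1) (by simpa using hj)
      simpa using this
    cases j with
    | zero =>
      have h0 : FreeGroup.mk ((x :: m).drop 0 ++ t) = FreeGroup.mk [x] * FreeGroup.mk (m ++ t) := by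
        rw [List.drop_zero, List.cons_append, mk_cons]
      rw [h0]
      have h1 : FreeGroup.mk (m ++ t) ≠ 1 := by simpa using hyp 1 (by simp)
      have h2 : FreeGroup.mk [x] * FreeGroup.mk (m ++ t) ≠ 1 := by
        rw [← h0]; exact hyp 0 (by simp)
      rw [getLast_mul x _ h1 h2]
      simpa using ih hyp' 0
    | succ i =>
      rw [List.drop_succ_cons]
      exact ih hyp' i

lemma walk_last_letter (d : Letter) (m : List Letter)
    (hyp : ∀ j, j ≤ m.length → FreeGroup.mk (m.drop j ++ [d]) ≠ 1) (j : ℕ) :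
    (FreeGroup.mk (m.drop j ++ [d])).toWord.getLast? = some d := by
  rw [walk_getLast [d] m hyp j, toWord_single]; rfl

lemma walk_ne_single (d c : Letter) (hne : c ≠ d) (m : List Letter)
    (hyp : ∀ j, j ≤ m.length → FreeGroup.mk (m.drop j ++ [d]) ≠ 1) (j : ℕ) :
    FreeGroup.mk (m.drop j ++ [d]) ≠ FreeGroup.mk [c] := by
  intro h
  have := congrArg (fun g => (FreeGroup.toWord g).getLast?) h
  rw [walk_last_letter d m hyp j, toWord_single] at this
  have h2 : some d = some c := this
  exact hne (Option.some_injective _ h2).symm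

lemma invL_invL (x : Letter) : invL (invL x) = x := by simp [invL]

def IrrP (w : List Letter) : Prop :=
  ∀ j, 0 < j → j < w.length → FreeGroup.mk (w.drop j) ≠ 1

/-- Structure theorem for irreducible trivial words. -/
lemma first_struct (k : ℕ) (v : List Letter) (hlen : v.length = k + 2)
    (hmk : FreeGroup.mk v = 1) (hirr : IrrP v) :
    ∃ (d₁ : Letter) (mid : List Letter), v = invL d₁ :: (mid ++ [d₁]) ∧
      mid.length = k ∧ FreeGroup.mk mid = 1 ∧
      (∀ j, FreeGroup.mk (mid.drop j) ≠ (FreeGroup.mk [d₁])⁻¹) := by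
  have hvne : v ≠ [] := by intro h; rw [h] at hlen; simp at hlen
  obtain ⟨c, r, rfl⟩ := List.exists_cons_of_ne_nil hvne
  have hrlen : r.length = k + 1 := by simpa using hlen
  have hrne : r ≠ [] := by intro h; rw [h] at hrlen; simp at hrlen
  set d₁ := r.getLast hrne with hd₁
  set mid := r.dropLast with hmid
  have hr : mid ++ [d₁] = r := List.dropLast_append_getLast hrne
  have hmidlen : mid.length = k := by
    have := (List.length_dropLast : r.dropLast.length = r.length - 1)
    rw [hrlen] at this; simpa [hmid] using this
  -- walk hypothesis
  have hW : ∀ j, j ≤ mid.length → FreeGroup.mk (mid.drop j ++ [d₁]) ≠ 1 := by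
    intro j hj
    have hdrop : mid.drop j ++ [d₁] = (c :: r).drop (j + 1) := by
      rw [List.drop_succ_cons, ← hr, List.drop_append_of_le_length hj]
    rw [hdrop]
    exact hirr (j + 1) (Nat.succ_pos j) (by omega)
  -- identify c
  have hmkr : FreeGroup.mk r = (FreeGroup.mk [c])⁻¹ := by
    rw [mk_cons] at hmk
    exact eq_inv_of_mul_eq_one_right hmk
  have hcd : invL c = d₁ := by
    have h0 := walk_last_letter d₁ mid hW 0
    rw [List.drop_zero, hr, hmkr, inv_single, toWord_single] at h0
    simpa using h0
  have hcd' : c = invL d₁ := by rw [← hcd, invL_invL]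
  refine ⟨d₁, mid, by rw [hcd', hr], hmidlen, ?_, ?_⟩
  · have : FreeGroup.mk mid * FreeGroup.mk [d₁] = FreeGroup.mk [d₁] := by
      rw [← mk_append, hr, hmkr, inv_single, hcd]
    exact mul_right_cancel (by rw [this, one_mul])
  · intro j h
    by_cases hj : j ≤ mid.length
    · apply hW j hj
      rw [mk_append, h, inv_mul_cancel]
    · rw [List.drop_eq_nil_of_le (by omega)] at h
      exact single_ne_one d₁ (by rw [← inv_inv (FreeGroup.mk [d₁]), ← h, ← FreeGroup.one_eq_mk, inv_one])
lemma first_build (d₁ : Letter) (mid : List Letter)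
    (hmk : FreeGroup.mk mid = 1)
    (hM : ∀ j, FreeGroup.mk (mid.drop j) ≠ (FreeGroup.mk [d₁])⁻¹) :
    FreeGroup.mk (invL d₁ :: (mid ++ [d₁])) = 1 ∧ IrrP (invL d₁ :: (mid ++ [d₁])) ∧
      (∀ e : Letter, e ≠ d₁ → ∀ j, FreeGroup.mk ((invL d₁ :: (mid ++ [d₁])).drop j)
        ≠ FreeGroup.mk [e]) := by
  have hW : ∀ j, j ≤ mid.length → FreeGroup.mk (mid.drop j ++ [d₁]) ≠ 1 := by
    intro j hj h
    exact hM j (eq_inv_of_mul_eq_one_left (by rw [← mk_append]; exact h))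
  have hdropv : ∀ i, i ≤ mid.length →
      (invL d₁ :: (mid ++ [d₁])).drop (i + 1) = mid.drop i ++ [d₁] := by
    intro i hi
    rw [List.drop_succ_cons, List.drop_append_of_le_length hi]
  refine ⟨?_, ?_, ?_⟩
  · rw [mk_cons, mk_append, hmk, one_mul, ← inv_single, inv_mul_cancel]
  · intro j hj hjlt
    have hlen : (invL d₁ :: (mid ++ [d₁])).length = mid.length + 2 := by simp
    rw [hlen] at hjlt
    obtain ⟨i, rfl⟩ : ∃ i, j = i + 1 := ⟨j - 1, by omega⟩
    rw [hdropv i (by omega)]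
    exact hW i (by omega)
  · intro e he j
    have hlen : (invL d₁ :: (mid ++ [d₁])).length = mid.length + 2 := by simp
    rcases j with _ | i
    · rw [List.drop_zero, mk_cons, mk_append, hmk, one_mul, ← inv_single, inv_mul_cancel]
      exact fun h => single_ne_one e h.symm
    · by_cases hi : i ≤ mid.length
      · rw [hdropv i hi]
        exact walk_ne_single d₁ e he mid hW i
      · rw [List.drop_eq_nil_of_le (by rw [hlen]; omega)]
        exact fun h => single_ne_one e h.symm

/-- Condition avoiding a bad set `B` along all suffixes. -/
def Cb (B : FG → Prop) (w : List Letter) : Prop := ∀ j, ¬ B (FreeGroup.mk (w.drop j))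

def GoodSet (B : FG → Prop) (n : ℕ) : Type :=
  {w : List Letter // w.length = n ∧ FreeGroup.mk w = 1 ∧ Cb B w}

def NGoodSet (B : FG → Prop) (n : ℕ) : Type :=
  {w : List Letter // w.length = n ∧ FreeGroup.mk w = 1 ∧ Cb B w ∧ w ≠ []}

def FirstSet (B : FG → Prop) (k : ℕ) : Type :=
  {v : List Letter // v.length = k ∧ FreeGroup.mk v = 1 ∧ Cb B v ∧ v ≠ [] ∧ IrrP v}

def Bd (d : Letter) : FG → Prop := fun g => g = (FreeGroup.mk [d])⁻¹

def Bfalse : FG → Prop := fun _ => False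

def MSet (d : Letter) (n : ℕ) : Type := GoodSet (Bd d) n

/-- extractors -/
def dlast (v : List Letter) : Letter := v.getLastD ((0 : Fin 2), true)
def dmid (v : List Letter) : List Letter := v.tail.dropLast

lemma dlast_spec (c d : Letter) (mid : List Letter) : dlast (c :: (mid ++ [d])) = d := by
  unfold dlast
  rw [show c :: (mid ++ [d]) = (c :: mid) ++ [d] by simp, List.getLastD_concat]

lemma dmid_spec (c d : Letter) (mid : List Letter) : dmid (c :: (mid ++ [d])) = mid := by
  unfold dmid
  rw [List.tail_cons, List.dropLast_concat]

lemma sigma_mk_eq {k : ℕ} {a b : Letter} (ma : MSet a k) (mb : MSet b k)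
    (h : a = b) (h2 : ma.1 = mb.1) : (⟨a, ma⟩ : Σ d, MSet d k) = ⟨b, mb⟩ := by
  subst h; exact congrArg _ (Subtype.ext h2)

/-- E2: irreducible trivial words of length `k+2` correspond to pairs. -/
def e2 (k : ℕ) : FirstSet Bfalse (k + 2) ≃ Σ d₁ : Letter, MSet d₁ k where
  toFun v := ⟨dlast v.1, dmid v.1, by
    obtain ⟨hlen, hmk, _, _, hirr⟩ := v.2
    obtain ⟨d₁, mid, hveq, hmlen, hmmk, hM⟩ := first_struct k v.1 hlen hmk hirr
    rw [hveq, dlast_spec, dmid_spec]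
    exact ⟨hmlen, hmmk, fun j => hM j⟩⟩
  invFun x := ⟨invL x.1 :: (x.2.1 ++ [x.1]), by
    obtain ⟨hmlen, hmmk, hM⟩ := x.2.2
    obtain ⟨h1, h2, _⟩ := first_build x.1 x.2.1 hmmk (fun j => hM j)
    exact ⟨by simp [hmlen], h1, fun j => not_false, by simp, h2⟩⟩
  left_inv := by
    rintro ⟨v, hlen, hmk, hC, hne, hirr⟩
    obtain ⟨d₁, mid, hveq, hmlen, hmmk, hM⟩ := first_struct k v hlen hmk hirr
    apply Subtype.ext
    show invL (dlast v) :: (dmid v ++ [dlast v]) = v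
    rw [hveq, dlast_spec, dmid_spec]
  right_inv := by
    rintro ⟨d₁, mid, hm⟩
    have h1 : dlast (invL d₁ :: (mid ++ [d₁])) = d₁ := dlast_spec _ _ _
    have h2 : dmid (invL d₁ :: (mid ++ [d₁])) = mid := dmid_spec _ _ _
    exact sigma_mk_eq _ _ h1 h2
lemma sigma_mk_eq' {k : ℕ} {P : Letter → Prop} {a b : {x : Letter // P x}}
    (ma : MSet a.1 k) (mb : MSet b.1 k) (h : a.1 = b.1) (h2 : ma.1 = mb.1) :
    (⟨a, ma⟩ : Σ x : {x : Letter // P x}, MSet x.1 k) = ⟨b, mb⟩ := by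
  have hab : a = b := Subtype.ext h
  subst hab; exact congrArg _ (Subtype.ext h2)

/-- E3b: first-return words avoiding the inverse of `d`. -/
def e3b (d : Letter) (k : ℕ) :
    FirstSet (Bd d) (k + 2) ≃ Σ x : {x : Letter // x ≠ invL d}, MSet x.1 k where
  toFun v := ⟨⟨dlast v.1, by
      obtain ⟨hlen, hmk, hC, hne, hirr⟩ := v.2
      obtain ⟨d₁, mid, hveq, hmlen, hmmk, hM⟩ := first_struct k v.1 hlen hmk hirr
      rw [hveq, dlast_spec]
      intro heq
      apply hC (k + 1)
      show FreeGroup.mk (v.1.drop (k + 1)) = _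
      rw [hveq, List.drop_succ_cons, ← hmlen, List.drop_left, heq, ← inv_single d]⟩,
    dmid v.1, by
      obtain ⟨hlen, hmk, hC, hne, hirr⟩ := v.2
      obtain ⟨d₁, mid, hveq, hmlen, hmmk, hM⟩ := first_struct k v.1 hlen hmk hirr
      show (dmid v.1).length = k ∧ FreeGroup.mk (dmid v.1) = 1 ∧ Cb (Bd (dlast v.1)) (dmid v.1)
      rw [hveq, dlast_spec, dmid_spec]
      exact ⟨hmlen, hmmk, fun j => hM j⟩⟩
  invFun x := ⟨invL x.1.1 :: (x.2.1 ++ [x.1.1]), by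
    obtain ⟨hmlen, hmmk, hM⟩ := x.2.2
    obtain ⟨h1, h2, h3⟩ := first_build x.1.1 x.2.1 hmmk (fun j => hM j)
    have hed : invL d ≠ x.1.1 := fun h => x.1.2 (by rw [← h])
    refine ⟨by simp [hmlen], h1, ?_, by simp, h2⟩
    intro j hBd
    exact h3 (invL d) hed j (by rw [show FreeGroup.mk [invL d] = (FreeGroup.mk [d])⁻¹ from (inv_single d).symm]; exact hBd)⟩
  left_inv := by
    rintro ⟨v, hlen, hmk, hC, hne, hirr⟩
    obtain ⟨d₁, mid, hveq, hmlen, hmmk, hM⟩ := first_struct k v hlen hmk hirr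
    apply Subtype.ext
    show invL (dlast v) :: (dmid v ++ [dlast v]) = v
    rw [hveq, dlast_spec, dmid_spec]
  right_inv := by
    rintro ⟨⟨d₁, hd₁⟩, mid, hm⟩
    have h1 : dlast (invL d₁ :: (mid ++ [d₁])) = d₁ := dlast_spec _ _ _
    have h2 : dmid (invL d₁ :: (mid ++ [d₁])) = mid := dmid_spec _ _ _
    exact sigma_mk_eq' _ _ h1 h2

lemma firstSet_zero_isEmpty (B : FG → Prop) : IsEmpty (FirstSet B 0) := by
  constructor
  rintro ⟨v, hlen, _, _, hne, _⟩
  exact hne (List.length_eq_zero_iff.mp hlen)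

lemma firstSet_one_isEmpty (B : FG → Prop) : IsEmpty (FirstSet B 1) := by
  constructor
  rintro ⟨v, hlen, hmk, _, _, _⟩
  obtain ⟨a, rfl⟩ := List.length_eq_one_iff.mp hlen
  exact single_ne_one a hmk

def Q (w : List Letter) (k : ℕ) : Prop :=
  k + 1 ≤ w.length ∧ FreeGroup.mk (w.drop (w.length - (k + 1))) = 1

lemma Q_top (w : List Letter) (hmk : FreeGroup.mk w = 1) (hne : w ≠ []) :
    Q w (w.length - 1) := by
  have h1 : 1 ≤ w.length := List.length_pos_iff.mpr hne
  refine ⟨by omega, ?_⟩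
  rw [show w.length - (w.length - 1 + 1) = 0 by omega, List.drop_zero]
  exact hmk

open Classical in
/-- Index of the last return to the identity. -/
def splitIdx (w : List Letter) (hmk : FreeGroup.mk w = 1) (hne : w ≠ []) : ℕ :=
  Nat.find (p := Q w) ⟨w.length - 1, Q_top w hmk hne⟩

lemma splitIdx_spec (w : List Letter) (hmk : FreeGroup.mk w = 1) (hne : w ≠ []) :
    Q w (splitIdx w hmk hne) := by
  classical
  unfold splitIdx
  exact Nat.find_spec _

lemma splitIdx_min (w : List Letter) (hmk : FreeGroup.mk w = 1) (hne : w ≠ [])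
    {l : ℕ} (hl : l < splitIdx w hmk hne) : ¬ Q w l := by
  classical
  unfold splitIdx at hl
  exact Nat.find_min _ hl

lemma splitIdx_le (w : List Letter) (hmk : FreeGroup.mk w = 1) (hne : w ≠ []) :
    splitIdx w hmk hne ≤ w.length - 1 := by
  classical
  unfold splitIdx
  exact Nat.find_le (Q_top w hmk hne)

lemma splitIdx_eq (w : List Letter) (hmk : FreeGroup.mk w = 1) (hne : w ≠ [])
    (k : ℕ) (hQ : Q w k) (hmin : ∀ l, l < k → ¬ Q w l) :
    splitIdx w hmk hne = k := by
  classical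
  unfold splitIdx
  rw [Nat.find_eq_iff]
  exact ⟨hQ, fun l hl => hmin l hl⟩

section Split
variable (B : FG → Prop) (hB : ¬ B 1)

lemma nil_notB (hB : ¬ B 1) : ¬ B (FreeGroup.mk ([] : List Letter)) := by
  rwa [← FreeGroup.one_eq_mk]

lemma split_fin_ext {n : ℕ} {a b : Fin n}
    (pa : GoodSet B (n - 1 - a) × FirstSet B (a + 1))
    (pb : GoodSet B (n - 1 - b) × FirstSet B (b + 1))
    (h : (a : ℕ) = b) (h1 : pa.1.1 = pb.1.1) (h2 : pa.2.1 = pb.2.1) :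
    (⟨a, pa⟩ : Σ k : Fin n, GoodSet B (n - 1 - k) × FirstSet B (k + 1)) = ⟨b, pb⟩ := by
  have hab : a = b := Fin.ext h
  subst hab
  exact congrArg _ (Prod.ext (Subtype.ext h1) (Subtype.ext h2))

def splitEquiv (n : ℕ) :
    NGoodSet B n ≃ Σ k : Fin n, GoodSet B (n - 1 - k) × FirstSet B (k + 1) where
  toFun z :=
    ⟨⟨splitIdx z.1 z.2.2.1 z.2.2.2.2, by
        obtain ⟨hlen, hmk, hC, hne⟩ := z.2
        have hpos : 0 < z.1.length := List.length_pos_iff.mpr hne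
        have hkle := splitIdx_le z.1 hmk hne
        omega⟩,
      ⟨z.1.take (z.1.length - (splitIdx z.1 z.2.2.1 z.2.2.2.2 + 1)), by
        obtain ⟨hlen, hmk, hC, hne⟩ := z.2
        set k := splitIdx z.1 z.2.2.1 z.2.2.2.2 with hk
        obtain ⟨hk1, hkmk⟩ := splitIdx_spec z.1 z.2.2.1 z.2.2.2.2
        set s := z.1.length - (k + 1) with hs
        have hul : (z.1.take s).length = s := by rw [List.length_take]; omega
        have humk : FreeGroup.mk (z.1.take s) = 1 := by
          have h2 := mk_append (z.1.take s) (z.1.drop s)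
          rw [List.take_append_drop, hmk, hkmk, mul_one] at h2
          exact h2.symm
        refine ⟨by show (z.1.take s).length = n - 1 - k; omega, humk, ?_⟩
        intro j
        by_cases hj : j ≤ s
        · have hdrop : (z.1.take s).drop j ++ z.1.drop s = z.1.drop j := by
            rw [← List.drop_append_of_le_length (by omega), List.take_append_drop]
          have h3 : FreeGroup.mk ((z.1.take s).drop j) = FreeGroup.mk (z.1.drop j) := by
            rw [← hdrop, mk_append, hkmk, mul_one]
          rw [h3]
          exact hC j
        · rw [List.drop_eq_nil_of_le (by omega)]
          exact nil_notB B hB⟩,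
      ⟨z.1.drop (z.1.length - (splitIdx z.1 z.2.2.1 z.2.2.2.2 + 1)), by
        obtain ⟨hlen, hmk, hC, hne⟩ := z.2
        set k := splitIdx z.1 z.2.2.1 z.2.2.2.2 with hk
        obtain ⟨hk1, hkmk⟩ := splitIdx_spec z.1 z.2.2.1 z.2.2.2.2
        set s := z.1.length - (k + 1) with hs
        have hvl : (z.1.drop s).length = k + 1 := by rw [List.length_drop]; omega
        refine ⟨by show (z.1.drop s).length = k + 1; exact hvl, hkmk, ?_, ?_, ?_⟩
        · intro j
          rw [List.drop_drop]
          exact hC (s + j)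
        · exact List.ne_nil_of_length_pos (by omega)
        · intro j hj0 hjlt heq
          rw [hvl] at hjlt
          have hQ : Q z.1 (k - j) := by
            refine ⟨by omega, ?_⟩
            rw [show z.1.length - (k - j + 1) = s + j by omega, ← List.drop_drop]
            exact heq
          exact splitIdx_min z.1 z.2.2.1 z.2.2.2.2 (show k - j < k by omega) hQ⟩⟩
  invFun z :=
    ⟨z.2.1.1 ++ z.2.2.1, by
      obtain ⟨hul, humk, huC⟩ := z.2.1.2
      obtain ⟨hvl, hvmk, hvC, hvne, hvirr⟩ := z.2.2.2
      have hul' : z.2.1.1.length = n - 1 - z.1 := hul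
      have hvl' : z.2.2.1.length = (z.1 : ℕ) + 1 := hvl
      have hkn : (z.1 : ℕ) < n := z.1.2
      refine ⟨?_, ?_, ?_, ?_⟩
      · rw [List.length_append]; omega
      · rw [mk_append, humk, hvmk, mul_one]
      · intro j
        rw [List.drop_append]
        by_cases hj : j ≤ z.2.1.1.length
        · rw [show j - z.2.1.1.length = 0 by omega, List.drop_zero]
          have h4 : FreeGroup.mk (z.2.1.1.drop j ++ z.2.2.1) = FreeGroup.mk (z.2.1.1.drop j) := by
            rw [mk_append, hvmk, mul_one]
          rw [h4]
          exact huC j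
        · rw [List.drop_eq_nil_of_le (by omega), List.nil_append]
          exact hvC (j - z.2.1.1.length)
      · simp [hvne]⟩
  left_inv := by
    rintro ⟨w, hlen, hmk, hC, hne⟩
    apply Subtype.ext
    exact List.take_append_drop _ w
  right_inv := by
    rintro ⟨⟨k, hkn⟩, ⟨u, hul, humk, huC⟩, ⟨v, hvl, hvmk, hvC, hvne, hvirr⟩⟩
    have hul' : u.length = n - 1 - k := hul
    have hvl' : v.length = k + 1 := hvl
    have hwlen : (u ++ v).length = u.length + (k + 1) := by
      rw [List.length_append, hvl']
    have hwne : u ++ v ≠ [] := by simp [hvne]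
    have hwmk : FreeGroup.mk (u ++ v) = 1 := by
      rw [mk_append, humk, hvmk, mul_one]
    have hidx : ∀ hmk' hne', splitIdx (u ++ v) hmk' hne' = k := by
      intro hmk' hne'
      apply splitIdx_eq
      · refine ⟨by omega, ?_⟩
        rw [show (u ++ v).length - (k + 1) = u.length by omega, List.drop_left]
        exact hvmk
      · rintro l hl ⟨hl1, hlmk⟩
        have hd : (u ++ v).drop ((u ++ v).length - (l + 1)) = v.drop (k - l) := by
          rw [List.drop_append,
            List.drop_eq_nil_of_le (by omega), List.nil_append]
          congr 1
          omega
        rw [hd] at hlmk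
        exact hvirr (k - l) (by omega) (by omega) hlmk
    apply split_fin_ext
    · exact hidx hwmk hwne
    · show (u ++ v).take ((u ++ v).length - (splitIdx (u ++ v) hwmk hwne + 1)) = u
      rw [hidx hwmk hwne, show (u ++ v).length - (k + 1) = u.length by omega, List.take_left]
    · show (u ++ v).drop ((u ++ v).length - (splitIdx (u ++ v) hwmk hwne + 1)) = v
      rw [hidx hwmk hwne, show (u ++ v).length - (k + 1) = u.length by omega, List.drop_left]
end Split

section Symm

lemma map_mk_list (σ : Letter → Letter) (φ : FG →* FG)
    (hφ : ∀ x : Letter, φ (FreeGroup.mk [x]) = FreeGroup.mk [σ x])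
    (w : List Letter) : φ (FreeGroup.mk w) = FreeGroup.mk (w.map σ) := by
  induction w with
  | nil => rw [← FreeGroup.one_eq_mk, map_one, List.map_nil, FreeGroup.one_eq_mk]
  | cons x w ih =>
    rw [List.map_cons, mk_cons (σ x) (w.map σ), mk_cons x w, map_mul, hφ, ih]

def msetEquiv (σ : Letter → Letter) (φ : FG →* FG)
    (hφ : ∀ x : Letter, φ (FreeGroup.mk [x]) = FreeGroup.mk [σ x])
    (hφφ : ∀ g, φ (φ g) = g) (d : Letter) (n : ℕ) (hσσ' : ∀ x, σ (σ x) = x) :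
    MSet d n ≃ MSet (σ d) n := by
  have hinj : Function.Injective φ := Function.LeftInverse.injective hφφ
  have transport : ∀ (e : Letter) (w : List Letter), w.length = n →
      FreeGroup.mk w = 1 → Cb (Bd e) w →
      (w.map σ).length = n ∧ FreeGroup.mk (w.map σ) = 1 ∧ Cb (Bd (σ e)) (w.map σ) := by
    intro e w hlen hmk hC
    refine ⟨by simpa using hlen, ?_, ?_⟩
    · rw [← map_mk_list σ φ hφ _, hmk, map_one]
    · intro j hBd
      apply hC j
      have hdrop : (w.map σ).drop j = (w.drop j).map σ := (List.map_drop : (w.drop j).map σ = (w.map σ).drop j).symm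
      have : φ (FreeGroup.mk (w.drop j)) = φ ((FreeGroup.mk [e])⁻¹) := by
        rw [map_mk_list σ φ hφ, ← hdrop, map_inv, hφ]
        exact hBd
      exact hinj this
  refine ⟨fun x => ⟨x.1.map σ, transport d x.1 x.2.1 x.2.2.1 x.2.2.2⟩,
    fun x => ⟨x.1.map σ, ?_⟩, ?_, ?_⟩
  · have h := transport (σ d) x.1 x.2.1 x.2.2.1 x.2.2.2
    rwa [hσσ' d] at h
  · intro x
    apply Subtype.ext
    show (x.1.map σ).map σ = x.1
    rw [List.map_map, show σ ∘ σ = id from funext hσσ', List.map_id]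
  · intro x
    apply Subtype.ext
    show (x.1.map σ).map σ = x.1
    rw [List.map_map, show σ ∘ σ = id from funext hσσ', List.map_id]
end Symm

/-- swap generators -/
def swapFin : Fin 2 → Fin 2 := fun i => 1 - i
def σ₁ : Letter → Letter := fun x => (swapFin x.1, x.2)
def φ₁ : FG →* FG := FreeGroup.map swapFin

lemma swapFin_invol (i : Fin 2) : swapFin (swapFin i) = i := by revert i; decide

lemma of_eq_mk' (i : Fin 2) : FreeGroup.of i = FreeGroup.mk [(i, true)] := rfl

lemma inv_of (i : Fin 2) : (FreeGroup.of i)⁻¹ = FreeGroup.mk [(i, false)] := by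
  rw [of_eq_mk', inv_single]; rfl

lemma hφ₁ : ∀ x : Letter, φ₁ (FreeGroup.mk [x]) = FreeGroup.mk [σ₁ x] := by
  rintro ⟨i, b⟩
  cases b
  · show φ₁ ((FreeGroup.of i)⁻¹) = _
    rw [map_inv, show φ₁ (FreeGroup.of i) = FreeGroup.of (swapFin i) from FreeGroup.map.of,
      inv_of]
    rfl
  · show φ₁ (FreeGroup.of i) = _
    rw [show φ₁ (FreeGroup.of i) = FreeGroup.of (swapFin i) from FreeGroup.map.of]
    rfl

lemma hφ₁φ₁ : ∀ g : FG, φ₁ (φ₁ g) = g := by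
  intro g
  show (φ₁.comp φ₁) g = MonoidHom.id FG g
  congr 1
  apply FreeGroup.ext_hom
  intro a
  simp [φ₁, FreeGroup.map.of, swapFin_invol]

/-- invert generator 0 (resp. 1) -/
def σinv (i0 : Fin 2) : Letter → Letter := fun x => if x.1 = i0 then invL x else x
def φinv (i0 : Fin 2) : FG →* FG :=
  FreeGroup.lift (fun i => if i = i0 then (FreeGroup.of i)⁻¹ else FreeGroup.of i)

lemma hφinv (i0 : Fin 2) : ∀ x : Letter, φinv i0 (FreeGroup.mk [x]) = FreeGroup.mk [σinv i0 x] := by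
  rintro ⟨i, b⟩
  have hof : φinv i0 (FreeGroup.of i) = if i = i0 then (FreeGroup.of i)⁻¹ else FreeGroup.of i :=
    FreeGroup.lift_apply_of
  cases b
  · show φinv i0 ((FreeGroup.of i)⁻¹) = _
    rw [map_inv, hof]
    by_cases h : i = i0
    · rw [if_pos h, inv_inv, of_eq_mk']
      simp [σinv, invL, h]
    · rw [if_neg h, inv_of]
      simp [σinv, invL, h]
  · show φinv i0 (FreeGroup.of i) = _
    rw [hof]
    by_cases h : i = i0
    · rw [if_pos h, inv_of]
      simp [σinv, invL, h]
    · rw [if_neg h, of_eq_mk']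
      simp [σinv, invL, h]

lemma hφinvφinv (i0 : Fin 2) : ∀ g : FG, φinv i0 (φinv i0 g) = g := by
  intro g
  show ((φinv i0).comp (φinv i0)) g = MonoidHom.id FG g
  congr 1
  apply FreeGroup.ext_hom
  intro a
  by_cases h : a = i0 <;>
    simp [φinv, FreeGroup.lift_apply_of, h]

lemma σ₁_invol (x : Letter) : σ₁ (σ₁ x) = x := by
  rcases x with ⟨i, b⟩; simp [σ₁, swapFin_invol]

lemma σinv_invol (i0 : Fin 2) (x : Letter) : σinv i0 (σinv i0 x) = x := by
  rcases x with ⟨i, b⟩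
  by_cases h : i = i0 <;> simp [σinv, invL, h]

lemma mset_card_symm (d : Letter) (n : ℕ) :
    Nat.card (MSet d n) = Nat.card (MSet ((0 : Fin 2), true) n) := by
  have move1 : ∀ e, Nat.card (MSet e n) = Nat.card (MSet (σ₁ e) n) := fun e =>
    Nat.card_congr (msetEquiv σ₁ φ₁ hφ₁ hφ₁φ₁ e n σ₁_invol)
  have move2 : ∀ i0 e, Nat.card (MSet e n) = Nat.card (MSet (σinv i0 e) n) := fun i0 e =>
    Nat.card_congr (msetEquiv (σinv i0) (φinv i0) (hφinv i0) (hφinvφinv i0) e n (σinv_invol i0))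
  have h00 : Nat.card (MSet ((0 : Fin 2), false) n) = Nat.card (MSet ((0 : Fin 2), true) n) := by
    have h := move2 0 ((0 : Fin 2), false)
    rwa [show σinv 0 ((0 : Fin 2), false) = ((0 : Fin 2), true) by simp [σinv, invL]] at h
  have h10 : Nat.card (MSet ((1 : Fin 2), true) n) = Nat.card (MSet ((0 : Fin 2), true) n) := by
    have h := move1 ((1 : Fin 2), true)
    rwa [show σ₁ ((1 : Fin 2), true) = ((0 : Fin 2), true) by
      simp [σ₁, swapFin]] at h
  have h11 : Nat.card (MSet ((1 : Fin 2), false) n) = Nat.card (MSet ((0 : Fin 2), true) n) := by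
    have h := move1 ((1 : Fin 2), false)
    rw [show σ₁ ((1 : Fin 2), false) = ((0 : Fin 2), false) by
      simp [σ₁, swapFin]] at h
    rw [h, h00]
  rcases d with ⟨i, b⟩
  have hi : i = 0 ∨ i = 1 := by omega
  rcases hi with rfl | rfl <;> cases b
  · exact h00
  · rfl
  · exact h11
  · exact h10

instance goodFinite (B : FG → Prop) (n : ℕ) : Finite (GoodSet B n) := finite_subtype n _
instance ngoodFinite (B : FG → Prop) (n : ℕ) : Finite (NGoodSet B n) := finite_subtype n _
instance firstFinite (B : FG → Prop) (n : ℕ) : Finite (FirstSet B n) := finite_subtype n _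
instance msetFinite (d : Letter) (n : ℕ) : Finite (MSet d n) := finite_subtype n _

def d0 : Letter := ((0 : Fin 2), true)

def cW (n : ℕ) : ℕ := Nat.card (GoodSet Bfalse n)
def cI (k : ℕ) : ℕ := Nat.card (FirstSet Bfalse k)
def cM (n : ℕ) : ℕ := Nat.card (MSet d0 n)
def cR (k : ℕ) : ℕ := Nat.card (FirstSet (Bd d0) k)

lemma hB_false : ¬ Bfalse 1 := fun h => h
lemma hB_d (d : Letter) : ¬ Bd d 1 := by
  intro h
  exact single_ne_one d (by rw [← inv_inv (FreeGroup.mk [d]), ← h, inv_one])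

/-- `tCount` as a count of lists. -/
lemma tCount_eq (n : ℕ) : tCount n = cW n := by
  apply Nat.card_congr
  refine ⟨fun f => ⟨List.ofFn f.1, by simp, ?_, fun j h => h⟩,
    fun w => ⟨fun i => w.1.get (Fin.cast w.2.1.symm i), ?_⟩, ?_, ?_⟩
  · rw [← prod_map_val]
    exact f.2
  · have hlist : (List.ofFn fun i => w.1.get (Fin.cast w.2.1.symm i)) = w.1 := by
      apply List.ext_getElem
      · simp [w.2.1]
      · intro i h1 h2
        simp [List.getElem_ofFn]
    rw [prod_map_val, hlist]
    exact w.2.2.1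
  · intro f
    apply Subtype.ext
    funext i
    simp [List.get_ofFn]
  · intro w
    apply Subtype.ext
    show (List.ofFn fun i => w.1.get (Fin.cast w.2.1.symm i)) = w.1
    apply List.ext_getElem
    · simp [w.2.1]
    · intro i h1 h2
      simp [List.getElem_ofFn]

def good_zero_unique (B : FG → Prop) (hB : ¬ B 1) : Unique (GoodSet B 0) := by
  refine ⟨⟨⟨[], rfl, (FreeGroup.one_eq_mk).symm, fun j => by
    rw [List.drop_nil, ← FreeGroup.one_eq_mk]; exact hB⟩⟩, ?_⟩
  rintro ⟨w, hlen, -, -⟩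
  apply Subtype.ext
  exact List.length_eq_zero_iff.mp hlen

lemma card_good_rec (B : FG → Prop) (hB : ¬ B 1) (n : ℕ) :
    Nat.card (GoodSet B n) = (if n = 0 then 1 else 0)
      + ∑ k ∈ Finset.range n,
          Nat.card (FirstSet B (k + 1)) * Nat.card (GoodSet B (n - 1 - k)) := by
  cases n with
  | zero =>
    haveI := good_zero_unique B hB
    simp [Nat.card_unique]
  | succ m =>
    have hne : (m + 1 : ℕ) ≠ 0 := Nat.succ_ne_zero m
    rw [if_neg hne, zero_add]
    have e : GoodSet B (m + 1) ≃ NGoodSet B (m + 1) := by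
      apply Equiv.subtypeEquivRight
      intro w
      constructor
      · rintro ⟨h1, h2, h3⟩
        exact ⟨h1, h2, h3, by intro h; rw [h] at h1; simp at h1⟩
      · rintro ⟨h1, h2, h3, -⟩
        exact ⟨h1, h2, h3⟩
    rw [Nat.card_congr (e.trans (splitEquiv B hB (m + 1))), card_sigma]
    have hstep : ∀ i : Fin (m + 1),
        Nat.card (GoodSet B (m + 1 - 1 - ↑i) × FirstSet B (↑i + 1))
          = (fun k => Nat.card (FirstSet B (k + 1)) * Nat.card (GoodSet B (m + 1 - 1 - k))) ↑i := by
      intro i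
      rw [Nat.card_prod, mul_comm]
    rw [Finset.sum_congr rfl (fun i _ => hstep i)]
    exact Fin.sum_univ_eq_sum_range
      (fun k => Nat.card (FirstSet B (k + 1)) * Nat.card (GoodSet B (m + 1 - 1 - k))) (m + 1)

lemma cW_rec (n : ℕ) : cW n = (if n = 0 then 1 else 0)
    + ∑ k ∈ Finset.range n, cI (k + 1) * cW (n - 1 - k) :=
  card_good_rec Bfalse hB_false n

lemma cM_rec (n : ℕ) : cM n = (if n = 0 then 1 else 0)
    + ∑ k ∈ Finset.range n, cR (k + 1) * cM (n - 1 - k) :=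
  card_good_rec (Bd d0) (hB_d d0) n

lemma letter_card : Fintype.card Letter = 4 := by simp

lemma cI_zero : cI 0 = 0 := by
  haveI := firstSet_zero_isEmpty Bfalse
  exact Nat.card_of_isEmpty
lemma cI_one : cI 1 = 0 := by
  haveI := firstSet_one_isEmpty Bfalse
  exact Nat.card_of_isEmpty
lemma cR_zero : cR 0 = 0 := by
  haveI := firstSet_zero_isEmpty (Bd d0)
  exact Nat.card_of_isEmpty
lemma cR_one : cR 1 = 0 := by
  haveI := firstSet_one_isEmpty (Bd d0)
  exact Nat.card_of_isEmpty

lemma cI_rec (k : ℕ) : cI (k + 2) = 4 * cM k := by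
  unfold cI
  rw [Nat.card_congr (e2 k), card_sigma]
  have : ∀ d : Letter, Nat.card (MSet d k) = cM k := fun d => mset_card_symm d k
  rw [Finset.sum_congr rfl (fun d _ => this d), Finset.sum_const, Finset.card_univ, letter_card]
  simp [mul_comm]

lemma cR_rec (k : ℕ) : cR (k + 2) = 3 * cM k := by
  unfold cR
  rw [Nat.card_congr (e3b d0 k), card_sigma]
  have : ∀ x : {x : Letter // x ≠ invL d0}, Nat.card (MSet x.1 k) = cM k :=
    fun x => mset_card_symm x.1 k
  rw [Finset.sum_congr rfl (fun d _ => this d), Finset.sum_const]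
  have hcard : Fintype.card {x : Letter // x ≠ invL d0} = 3 := by
    simp [Fintype.card_subtype_compl]
  rw [Finset.card_univ, hcard]
  simp [mul_comm]


open PowerSeries


lemma ps_rec (A G : ℕ → ℚ) (hG0 : G 0 = 0)
    (h : ∀ n, A n = (if n = 0 then 1 else 0) + ∑ k ∈ Finset.range n, G (k + 1) * A (n - 1 - k)) :
    PowerSeries.mk A = 1 + PowerSeries.mk G * PowerSeries.mk A := by
  ext n
  rw [map_add, PowerSeries.coeff_mk, PowerSeries.coeff_one, PowerSeries.coeff_mul]
  have hanti : ∑ p ∈ Finset.HasAntidiagonal.antidiagonal n,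
      (PowerSeries.coeff p.1) (PowerSeries.mk G) * (PowerSeries.coeff p.2) (PowerSeries.mk A)
      = ∑ k ∈ Finset.range (n + 1), G k * A (n - k) := by
    simp only [PowerSeries.coeff_mk]
    exact Finset.Nat.sum_antidiagonal_eq_sum_range_succ (fun i j => G i * A j) n
  rw [hanti, Finset.sum_range_succ']
  have hshift : ∀ k, G (k + 1) * A (n - (k + 1)) = G (k + 1) * A (n - 1 - k) := by
    intro k
    congr 2
    omega
  rw [Finset.sum_congr rfl (fun k _ => hshift k), hG0, zero_mul, add_zero]
  exact h n

def Tq : ℚ⟦X⟧ := PowerSeries.mk fun n => (cW n : ℚ)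
def Uq : ℚ⟦X⟧ := PowerSeries.mk fun n => (cI n : ℚ)
def Lq : ℚ⟦X⟧ := PowerSeries.mk fun n => (cM n : ℚ)
def Rq : ℚ⟦X⟧ := PowerSeries.mk fun n => (cR n : ℚ)

lemma cast_rec (c g : ℕ → ℕ)
    (h : ∀ n, c n = (if n = 0 then 1 else 0) + ∑ k ∈ Finset.range n, g (k + 1) * c (n - 1 - k)) :
    ∀ n, (c n : ℚ) = (if n = 0 then 1 else 0)
      + ∑ k ∈ Finset.range n, (g (k + 1) : ℚ) * (c (n - 1 - k) : ℚ) := by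
  intro n
  rw [h n]
  push_cast [apply_ite (Nat.cast : ℕ → ℚ)]
  ring

lemma hT : Tq = 1 + Uq * Tq :=
  ps_rec _ _ (by simp [cI_zero]) (cast_rec cW cI cW_rec)

lemma hL : Lq = 1 + Rq * Lq :=
  ps_rec _ _ (by simp [cR_zero]) (cast_rec cM cR cM_rec)

lemma coeff_two_shift (c : ℚ) (φ : ℚ⟦X⟧) (n : ℕ) :
    (PowerSeries.coeff n) (X ^ 2 * (c • φ)) =
      if 2 ≤ n then c * (PowerSeries.coeff (n - 2)) φ else 0 := by
  rw [PowerSeries.coeff_X_pow_mul']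
  by_cases h : 2 ≤ n <;> simp [h]

lemma hU : Uq = X ^ 2 * ((4 : ℚ) • Lq) := by
  ext n
  rw [coeff_two_shift]
  match n with
  | 0 => simpa [Uq] using (by exact_mod_cast cI_zero : (cI 0 : ℚ) = 0)
  | 1 => simpa [Uq] using (by exact_mod_cast cI_one : (cI 1 : ℚ) = 0)
  | (m + 2) =>
    rw [if_pos (by omega)]
    simp only [Uq, Lq, PowerSeries.coeff_mk]
    rw [show m + 2 - 2 = m by omega, cI_rec m]
    push_cast
    ring

lemma hR : Rq = X ^ 2 * ((3 : ℚ) • Lq) := by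
  ext n
  rw [coeff_two_shift]
  match n with
  | 0 => simpa [Rq] using (by exact_mod_cast cR_zero : (cR 0 : ℚ) = 0)
  | 1 => simpa [Rq] using (by exact_mod_cast cR_one : (cR 1 : ℚ) = 0)
  | (m + 2) =>
    rw [if_pos (by omega)]
    simp only [Rq, Lq, PowerSeries.coeff_mk]
    rw [show m + 2 - 2 = m by omega, cR_rec m]
    push_cast
    ring

theorem main_quadratic :
    (1 - 16 * X ^ 2) * Tq ^ 2 + 2 * Tq - 3 = 0 := by
  have e1 : Tq = 1 + 4 * X ^ 2 * Lq * Tq := by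
    conv_lhs => rw [hT]
    rw [hU]
    rw [smul_eq_C_mul, show (PowerSeries.C (4 : ℚ)) = (4 : ℚ⟦X⟧) from map_ofNat _ 4]
    ring
  have e2 : Lq = 1 + 3 * X ^ 2 * Lq * Lq := by
    conv_lhs => rw [hL]
    rw [hR, smul_eq_C_mul, show (PowerSeries.C (3 : ℚ)) = (3 : ℚ⟦X⟧) from map_ofNat _ 3]
    ring
  linear_combination (Tq + 3 - 12 * X ^ 2 * Lq * Tq) * e1 + 16 * X ^ 2 * Tq ^ 2 * e2

end FGaux

open PowerSeries in
/-- The generating function `T(z) = Σ t_n z^n` of trivial words in the free group on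
two generators satisfies `(1 − 16z²)·T² + 2T − 3 = 0`. -/
theorem freeGroup_trivial_words_quadratic :
    (1 - 16 * X ^ 2) * (PowerSeries.mk fun n => (tCount n : ℚ)) ^ 2
      + 2 * (PowerSeries.mk fun n => (tCount n : ℚ)) - 3 = 0 := by
  have hmk : (PowerSeries.mk fun n => (tCount n : ℚ)) = FGaux.Tq := by
    ext n
    simp [FGaux.Tq, PowerSeries.coeff_mk, FGaux.tCount_eq]
  rw [hmk]
  exact FGaux.main_quadratic

end
end

section
/- Let F be the free group on a finite set of generators and let S ⊆ F be a set closed under taking inverses. Define a step relation R on F by: R w v holds if and only if either v = x·w·x⁻¹ for some generator x or inverse of a generator x, or v = w·r for some r ∈ S. Then for every w ∈ F, w lies in the normal closure of S in F if and only if w is reachable from the identity element under the reflexive–transitive closure of R. -/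
private def stepRel {α : Type*} (S : Set (FreeGroup α)) :
    FreeGroup α → FreeGroup α → Prop :=
  fun u v =>
    (∃ x : α, v = FreeGroup.of x * u * (FreeGroup.of x)⁻¹ ∨
        v = (FreeGroup.of x)⁻¹ * u * FreeGroup.of x) ∨
    ∃ r ∈ S, v = u * r

private lemma reach_conj {α : Type*} (S : Set (FreeGroup α)) (g : FreeGroup α) :
    ∀ w, Relation.ReflTransGen (stepRel S) 1 w →
      Relation.ReflTransGen (stepRel S) 1 (g * w * g⁻¹) := by
  induction g using FreeGroup.induction_on with
  | C1 => intro w hw; simpa using hw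
  | of x => intro w hw; exact hw.tail (Or.inl ⟨x, Or.inl rfl⟩)
  | inv_of x _ => intro w hw; exact hw.tail (Or.inl ⟨x, Or.inr rfl⟩)
  | mul a b ha hb =>
      intro w hw
      have := ha _ (hb _ hw)
      simpa [mul_assoc] using this

private lemma reach_mul_conj {α : Type*} (S : Set (FreeGroup α)) {w s : FreeGroup α}
    (hw : Relation.ReflTransGen (stepRel S) 1 w) (hs : s ∈ S) (g : FreeGroup α) :
    Relation.ReflTransGen (stepRel S) 1 (w * (g * s * g⁻¹)) := by
  have h1 : Relation.ReflTransGen (stepRel S) 1 (g⁻¹ * w * g) := by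
    simpa using reach_conj S g⁻¹ w hw
  have h2 : Relation.ReflTransGen (stepRel S) 1 (g⁻¹ * w * g * s) :=
    h1.tail (Or.inr ⟨s, hs, rfl⟩)
  have h3 := reach_conj S g _ h2
  have : g * (g⁻¹ * w * g * s) * g⁻¹ = w * (g * s * g⁻¹) := by group
  rwa [this] at h3

/-- Irreducibility of the elementary moves (Lemma 3): in the free group `F` on a
finite set of generators, for a set `S` of relators closed under inverses, an element
`w` lies in the normal closure of `S` if and only if `w` is reachable from the
identity by a finite sequence of moves, each of which is either conjugation by a
generator or by the inverse of a generator, or right multiplication by an element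
of `S`. -/
theorem normalClosure_iff_reachable {α : Type*} [Finite α]
    (S : Set (FreeGroup α)) (hS : ∀ s ∈ S, s⁻¹ ∈ S) (w : FreeGroup α) :
    w ∈ Subgroup.normalClosure S ↔
      Relation.ReflTransGen
        (fun u v =>
          (∃ x : α, v = FreeGroup.of x * u * (FreeGroup.of x)⁻¹ ∨
              v = (FreeGroup.of x)⁻¹ * u * FreeGroup.of x) ∨
          ∃ r ∈ S, v = u * r)
        1 w := by
  show _ ↔ Relation.ReflTransGen (stepRel S) 1 w
  constructor
  · intro hw
    induction hw using Subgroup.closure_induction_right with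
    | one => exact Relation.ReflTransGen.refl
    | mul_right x hx y hy ih =>
        obtain ⟨s, hs, hconj⟩ := Group.mem_conjugatesOfSet_iff.mp hy
        obtain ⟨g, rfl⟩ := isConj_iff.mp hconj
        exact reach_mul_conj S ih hs g
    | mul_inv_cancel x hx y hy ih =>
        obtain ⟨s, hs, hconj⟩ := Group.mem_conjugatesOfSet_iff.mp hy
        obtain ⟨g, rfl⟩ := isConj_iff.mp hconj
        have : (g * s * g⁻¹)⁻¹ = g * s⁻¹ * g⁻¹ := by group
        rw [this]
        exact reach_mul_conj S ih (hS s hs) g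
  · intro hw
    induction hw with
    | refl => exact Subgroup.one_mem _
    | tail _ hstep ih =>
        rcases hstep with ⟨x, h | h⟩ | ⟨r, hr, h⟩
        · rw [h]
          exact (Subgroup.normalClosure_normal).conj_mem _ ih _
        · rw [h]
          simpa using (Subgroup.normalClosure_normal).conj_mem _ ih (FreeGroup.of x)⁻¹
        · rw [h]
          exact Subgroup.mul_mem _ ih (Subgroup.subset_normalClosure hr)
end
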